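/- There exists a constant c > 0 such that for all even positive integers n, |Φ(n) − (2^n − 2^{n/2})| ≤ c·n·2^{n/3}. -/
import Mathlib


/-- `Phi n` is the number of nonempty subsets `A` of `{1,2,...,n}` such that
`gcd(A)` is relatively prime to `n`. -/
def Phi (n : ℕ) : ℕ :=
  ((Finset.Icc 1 n).powerset.filter
    (fun A => A.Nonempty ∧ Nat.gcd (A.gcd id) n = 1)).card

lemma card_nonempty_powerset (s : Finset ℕ) :
    (s.powerset.filter (fun A => A.Nonempty)).card = 2 ^ s.card - 1 := by
  have h : s.powerset.filter (fun A => A.Nonempty) = s.powerset.erase ∅ := by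
    ext A
    simp [Finset.nonempty_iff_ne_empty, and_comm]
  rw [h, Finset.card_erase_of_mem (Finset.empty_mem_powerset s), Finset.card_powerset]

theorem Phi_asymptotic_even :
    ∃ c : ℝ, 0 < c ∧ ∀ n : ℕ, 0 < n → Even n →
      |(Phi n : ℝ) - (2 ^ n - 2 ^ (n / 2))| ≤ c * n * (2 : ℝ) ^ ((n : ℝ) / 3) := by
  refine ⟨1, one_pos, fun n hn hev => ?_⟩
  have hn0 : n ≠ 0 := hn.ne'
  have h2n : 2 ∣ n := hev.two_dvd
  set T := (Finset.Icc 1 n).powerset.filter (fun A => A.Nonempty) with hT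
  set Bad := T.filter (fun A => ¬ Nat.gcd (A.gcd id) n = 1) with hBad
  set B := fun p : ℕ => ((Finset.Icc 1 n).filter (fun a => p ∣ a)).powerset.filter
      (fun A => A.Nonempty) with hB
  have hIcc : Finset.Icc 1 n = Finset.Ioc 0 n := rfl
  have hBcard : ∀ p : ℕ, (B p).card = 2 ^ (n / p) - 1 := by
    intro p
    rw [hB, card_nonempty_powerset]
    rw [hIcc, Nat.Ioc_filter_dvd_card_eq_div]
  have hTcard : T.card = 2 ^ n - 1 := by
    rw [hT, card_nonempty_powerset, Nat.card_Icc]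
    norm_num
  have hsplit : Phi n + Bad.card = 2 ^ n - 1 := by
    have h := Finset.card_filter_add_card_filter_not
      (s := T) (p := fun A => Nat.gcd (A.gcd id) n = 1)
    rw [hTcard] at h
    have hPhi : Phi n = (T.filter (fun A => Nat.gcd (A.gcd id) n = 1)).card := by
      rw [Phi, hT, Finset.filter_filter]
    rw [hPhi, hBad]
    exact h
  have hB2sub : B 2 ⊆ Bad := by
    intro A hA
    rw [hB, Finset.mem_filter, Finset.mem_powerset] at hA
    obtain ⟨hsub, hne⟩ := hA
    have hsub' : A ⊆ Finset.Icc 1 n := hsub.trans (Finset.filter_subset _ _)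
    rw [hBad, Finset.mem_filter]
    refine ⟨?_, ?_⟩
    · rw [hT, Finset.mem_filter, Finset.mem_powerset]; exact ⟨hsub', hne⟩
    · intro h1
      have h2g : 2 ∣ A.gcd id := Finset.dvd_gcd fun a ha => (Finset.mem_filter.1 (hsub ha)).2
      have h21 : (2:ℕ) ∣ Nat.gcd (A.gcd id) n := Nat.dvd_gcd h2g h2n
      rw [h1] at h21
      exact absurd h21 (by norm_num)
  have hBadsub : Bad ⊆ n.primeFactors.biUnion B := by
    intro A hA
    rw [hBad, Finset.mem_filter, hT, Finset.mem_filter, Finset.mem_powerset] at hA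
    obtain ⟨⟨hsub, hne⟩, hg⟩ := hA
    obtain ⟨p, hp, hpd⟩ := Nat.exists_prime_and_dvd hg
    have hpn : p ∣ n := hpd.trans (Nat.gcd_dvd_right _ _)
    have hpg : p ∣ A.gcd id := hpd.trans (Nat.gcd_dvd_left _ _)
    rw [Finset.mem_biUnion]
    refine ⟨p, Nat.mem_primeFactors.2 ⟨hp, hpn, hn0⟩, ?_⟩
    rw [hB, Finset.mem_filter, Finset.mem_powerset]
    exact ⟨fun a ha => Finset.mem_filter.2 ⟨hsub ha, hpg.trans (Finset.gcd_dvd ha)⟩, hne⟩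
  have h2pf : 2 ∈ n.primeFactors := Nat.mem_primeFactors.2 ⟨Nat.prime_two, h2n, hn0⟩
  have hupper : Bad.card ≤ (2 ^ (n/2) - 1) +
      ∑ p ∈ n.primeFactors.erase 2, (2 ^ (n/p) - 1) := by
    calc Bad.card ≤ (n.primeFactors.biUnion B).card := Finset.card_le_card hBadsub
      _ ≤ ∑ p ∈ n.primeFactors, (B p).card := Finset.card_biUnion_le
      _ = (B 2).card + ∑ p ∈ n.primeFactors.erase 2, (B p).card :=
          (Finset.add_sum_erase _ _ h2pf).symm
      _ = _ := by
          rw [hBcard 2]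
          exact congrArg _ (Finset.sum_congr rfl fun p _ => hBcard p)
  have hlower : 2 ^ (n/2) - 1 ≤ Bad.card := by
    rw [← hBcard 2]; exact Finset.card_le_card hB2sub
  have hE : ∑ p ∈ n.primeFactors.erase 2, (2 ^ (n/p) - 1) ≤ n * 2 ^ (n / 3) := by
    have hterm : ∀ p ∈ n.primeFactors.erase 2, 2 ^ (n/p) - 1 ≤ 2 ^ (n/3) := by
      intro p hp
      obtain ⟨hp2, hpf⟩ := Finset.mem_erase.1 hp
      have hp3 : 3 ≤ p := by
        have := (Nat.mem_primeFactors.1 hpf).1.two_le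
        omega
      exact le_trans (Nat.sub_le _ _)
        (Nat.pow_le_pow_right (by norm_num) (Nat.div_le_div_left hp3 (by norm_num)))
    have hcard : (n.primeFactors.erase 2).card ≤ n := by
      have hsub : n.primeFactors.erase 2 ⊆ Finset.Icc 1 n := by
        intro p hp
        have hpf := (Finset.mem_erase.1 hp).2
        obtain ⟨hpp, hpd, -⟩ := Nat.mem_primeFactors.1 hpf
        exact Finset.mem_Icc.2 ⟨hpp.one_lt.le, Nat.le_of_dvd hn hpd⟩
      calc _ ≤ (Finset.Icc 1 n).card := Finset.card_le_card hsub
        _ = n := by rw [Nat.card_Icc]; omega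
    calc ∑ p ∈ n.primeFactors.erase 2, (2 ^ (n/p) - 1)
        ≤ (n.primeFactors.erase 2).card • 2 ^ (n/3) :=
          Finset.sum_le_card_nsmul _ _ _ hterm
      _ = (n.primeFactors.erase 2).card * 2 ^ (n/3) := by rw [smul_eq_mul]
      _ ≤ n * 2 ^ (n/3) := Nat.mul_le_mul_right _ hcard
  have h1n : (1:ℕ) ≤ 2 ^ n := Nat.one_le_pow _ _ (by norm_num)
  have h1n2 : (1:ℕ) ≤ 2 ^ (n/2) := Nat.one_le_pow _ _ (by norm_num)
  -- cast to ℝ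
  have hsplitR : (Phi n : ℝ) + Bad.card + 1 = 2 ^ n := by
    have h : Phi n + Bad.card + 1 = 2 ^ n := by omega
    exact_mod_cast h
  have hlowerR : (2:ℝ) ^ (n/2) ≤ Bad.card + 1 := by
    have h : 2 ^ (n/2) ≤ Bad.card + 1 := by omega
    exact_mod_cast h
  have hupperR : (Bad.card : ℝ) + 1 ≤ 2 ^ (n/2) + n * 2 ^ (n/3) := by
    have h : Bad.card + 1 ≤ 2 ^ (n/2) + n * 2 ^ (n/3) := by omega
    exact_mod_cast h
  have hpow : ((2:ℝ) ^ (n/3 : ℕ)) ≤ (2:ℝ) ^ ((n:ℝ)/3) := by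
    rw [← Real.rpow_natCast 2 (n/3)]
    apply Real.rpow_le_rpow_of_exponent_le one_le_two
    calc ((n/3 : ℕ) : ℝ) ≤ (n:ℝ) / ((3:ℕ):ℝ) := Nat.cast_div_le
      _ = (n:ℝ) / 3 := by norm_num
  have habs : |(Phi n : ℝ) - (2 ^ n - 2 ^ (n / 2))| = (Bad.card + 1) - 2 ^ (n/2) := by
    rw [abs_of_nonpos (by linarith)]
    ring_nf
    linarith
  rw [one_mul, habs]
  calc ((Bad.card : ℝ) + 1) - 2 ^ (n/2) ≤ (n:ℝ) * 2 ^ (n/3 : ℕ) := by linarith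
    _ ≤ (n:ℝ) * 2 ^ ((n:ℝ)/3) := mul_le_mul_of_nonneg_left hpow (Nat.cast_nonneg n)
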